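/- arXiv:2208.03406 — 7 statements merged into one kernel-verified Lean document; each statement's English description precedes it below -/
import Mathlib

section
/- If (x*, y*) is a Nash equilibrium of the bimatrix game (A, B), then setting p* = x*ᵀ A y* and q* = x*ᵀ B y*, the point (x*, y*, p*, q*) satisfies (A y*)_i ≤ p* for every i ∈ {1,…,m} and (Bᵀ x*)_j ≤ q* for every j ∈ {1,…,n}, and its objective value x*ᵀ A y* + x*ᵀ B y* − p* − q* equals 0; in particular, it maximizes xᵀ A y + xᵀ B y − p − q over all mixed strategies x, y and reals p, q satisfying (A y)_i ≤ p for all i and (Bᵀ x)_j ≤ q for all j. -/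
open Matrix Finset

lemma dot_le_of_forall_le {k : ℕ} (x v : Fin k → ℝ) (p : ℝ)
    (hx : ∀ i, 0 ≤ x i) (hxs : ∑ i, x i = 1) (hv : ∀ i, v i ≤ p) :
    x ⬝ᵥ v ≤ p := by
  calc x ⬝ᵥ v = ∑ i, x i * v i := rfl
    _ ≤ ∑ i, x i * p := by
        apply Finset.sum_le_sum
        intro i _
        exact mul_le_mul_of_nonneg_left (hv i) (hx i)
    _ = p := by rw [← Finset.sum_mul, hxs, one_mul]

/-- If `(x*, y*)` is a Nash equilibrium of the bimatrix game `(A, B)`,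
then with `p* = x*ᵀ A y*` and `q* = x*ᵀ B y*`, the point `(x*, y*, p*, q*)` is feasible
for the bilinear program, its objective value is `0`, and it maximizes the objective
over all feasible points. -/
theorem nash_gives_optimal_bilinear
    (m n : ℕ) (hm : 1 ≤ m) (hn : 1 ≤ n)
    (A B : Matrix (Fin m) (Fin n) ℝ)
    (xs : Fin m → ℝ) (ys : Fin n → ℝ)
    (hxs : ∀ i, 0 ≤ xs i) (hxssum : ∑ i, xs i = 1)
    (hys : ∀ j, 0 ≤ ys j) (hyssum : ∑ j, ys j = 1)
    (hNash1 : ∀ x : Fin m → ℝ, (∀ i, 0 ≤ x i) → ∑ i, x i = 1 →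
      x ⬝ᵥ (A *ᵥ ys) ≤ xs ⬝ᵥ (A *ᵥ ys))
    (hNash2 : ∀ y : Fin n → ℝ, (∀ j, 0 ≤ y j) → ∑ j, y j = 1 →
      xs ⬝ᵥ (B *ᵥ y) ≤ xs ⬝ᵥ (B *ᵥ ys)) :
    (∀ i, (A *ᵥ ys) i ≤ xs ⬝ᵥ (A *ᵥ ys)) ∧
    (∀ j, (Bᵀ *ᵥ xs) j ≤ xs ⬝ᵥ (B *ᵥ ys)) ∧
    (xs ⬝ᵥ (A *ᵥ ys) + xs ⬝ᵥ (B *ᵥ ys) - (xs ⬝ᵥ (A *ᵥ ys)) - (xs ⬝ᵥ (B *ᵥ ys)) = 0) ∧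
    (∀ (x : Fin m → ℝ) (y : Fin n → ℝ) (p q : ℝ),
      (∀ i, 0 ≤ x i) → ∑ i, x i = 1 →
      (∀ j, 0 ≤ y j) → ∑ j, y j = 1 →
      (∀ i, (A *ᵥ y) i ≤ p) → (∀ j, (Bᵀ *ᵥ x) j ≤ q) →
      x ⬝ᵥ (A *ᵥ y) + x ⬝ᵥ (B *ᵥ y) - p - q ≤
        xs ⬝ᵥ (A *ᵥ ys) + xs ⬝ᵥ (B *ᵥ ys) - (xs ⬝ᵥ (A *ᵥ ys)) - (xs ⬝ᵥ (B *ᵥ ys))) := by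
  refine ⟨?_, ?_, by ring, ?_⟩
  · intro i
    have := hNash1 (Pi.single i 1) (fun k => by
      by_cases h : k = i <;> simp [Pi.single_apply, h]) (by simp)
    simpa [single_dotProduct] using this
  · intro j
    have := hNash2 (Pi.single j 1) (fun k => by
      by_cases h : k = j <;> simp [Pi.single_apply, h]) (by simp)
    have h2 : xs ⬝ᵥ (B *ᵥ Pi.single j 1) = (Bᵀ *ᵥ xs) j := by
      simp [Matrix.mulVec, dotProduct, Matrix.transpose_apply,
        Pi.single_apply, mul_comm]
    rw [h2] at this
    exact this
  · intro x y p q hx hxsum hy hysum hp hq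
    have h1 : x ⬝ᵥ (A *ᵥ y) ≤ p := dot_le_of_forall_le x _ p hx hxsum hp
    have h2 : x ⬝ᵥ (B *ᵥ y) ≤ q := by
      have : x ⬝ᵥ (B *ᵥ y) = y ⬝ᵥ (Bᵀ *ᵥ x) := by
        simp [Matrix.mulVec, dotProduct, Matrix.transpose_apply,
          Finset.mul_sum]
        rw [Finset.sum_comm]
        simp [mul_comm, mul_left_comm]
      rw [this]
      exact dot_le_of_forall_le y _ q hy hysum hq
    linarith
end

section
/- If the mixed strategy profile x̄ = (x̄^1,…,x̄^n) is a Nash equilibrium, then setting p̄^i = U_i(x̄) for each player i, the point (x̄, p̄) is an optimal solution of the multilinear program MLP1: it satisfies u_i(s, x̄) ≤ p̄^i for every player i and s ∈ S_i, and for every mixed strategy profile x and every p ∈ ℝ^n with u_i(s, x) ≤ p^i for all i and s ∈ S_i, one has ∑_{i=1}^n U_i(x) − ∑_{i=1}^n p^i ≤ ∑_{i=1}^n U_i(x̄) − ∑_{i=1}^n p̄^i. -/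
open Finset

/-- Expected payoff `U_i(x)` of player `i` under the mixed strategy profile `x`. -/
def expPayoff {n : ℕ} {S : Fin n → Type} [∀ i, Fintype (S i)]
    (A : Fin n → (∀ j, S j) → ℝ) (x : ∀ i, S i → ℝ) (i : Fin n) : ℝ :=
  ∑ t : ∀ j, S j, A i t * ∏ j, x j (t j)

/-- Expected payoff `u_i(s, x)` of player `i` playing the pure strategy `s` while the
other players play their mixed strategies from `x`: summing over full pure profiles `t`
with `t i = s` is the same as summing over tuples `ŝ` of pure strategies of the others. -/
def purePayoff {n : ℕ} {S : Fin n → Type} [∀ i, Fintype (S i)] [∀ i, DecidableEq (S i)]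
    (A : Fin n → (∀ j, S j) → ℝ) (x : ∀ i, S i → ℝ) (i : Fin n) (s : S i) : ℝ :=
  ∑ t : ∀ j, S j, if t i = s then A i t * ∏ j ∈ Finset.univ.erase i, x j (t j) else 0

/-- `U^i`: the maximum difference of any two payoffs of player `i`. -/
noncomputable def payoffRange {n : ℕ} {S : Fin n → Type} [∀ i, Fintype (S i)]
    [∀ i, Nonempty (S i)] (A : Fin n → (∀ j, S j) → ℝ) (i : Fin n) : ℝ :=
  Finset.univ.sup' Finset.univ_nonempty (A i) - Finset.univ.inf' Finset.univ_nonempty (A i)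

lemma expPayoff_eq_sum {n : ℕ} {S : Fin n → Type} [∀ i, Fintype (S i)]
    [∀ i, DecidableEq (S i)]
    (A : Fin n → (∀ j, S j) → ℝ) (x : ∀ i, S i → ℝ) (i : Fin n) :
    expPayoff A x i = ∑ s, x i s * purePayoff A x i s := by
  unfold expPayoff purePayoff
  simp only [Finset.mul_sum]
  rw [Finset.sum_comm]
  refine Finset.sum_congr rfl fun t _ => ?_
  rw [Finset.sum_eq_single (t i)]
  · simp [← Finset.mul_prod_erase Finset.univ (fun j => x j (t j)) (Finset.mem_univ i)]
    ring
  · intro b _ hb; simp [Ne.symm hb]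
  · simp

lemma purePayoff_update {n : ℕ} {S : Fin n → Type} [∀ i, Fintype (S i)]
    [∀ i, DecidableEq (S i)]
    (A : Fin n → (∀ j, S j) → ℝ) (x : ∀ i, S i → ℝ) (i : Fin n) (y : S i → ℝ) (s : S i) :
    purePayoff A (Function.update x i y) i s = purePayoff A x i s := by
  unfold purePayoff
  refine Finset.sum_congr rfl fun t _ => ?_
  congr 1
  refine congrArg _ (Finset.prod_congr rfl fun j hj => ?_)
  rw [Function.update_of_ne (Finset.ne_of_mem_erase hj)]

/-- If the mixed strategy profile `x̄` is a Nash equilibrium, then with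
`p̄^i = U_i(x̄)` the point `(x̄, p̄)` is an optimal solution of MLP1: it is feasible, and its
objective value dominates the objective value of every feasible point. -/
theorem nash_gives_optimal_mlp1
    (n : ℕ) (hn : 2 ≤ n) (S : Fin n → Type)
    [∀ i, Fintype (S i)] [∀ i, Nonempty (S i)] [∀ i, DecidableEq (S i)]
    (A : Fin n → (∀ j, S j) → ℝ)
    (x : ∀ i, S i → ℝ)
    (hx0 : ∀ i s, 0 ≤ x i s) (hx1 : ∀ i, ∑ s, x i s = 1)
    (hNash : ∀ (i : Fin n) (y : S i → ℝ), (∀ s, 0 ≤ y s) → ∑ s, y s = 1 →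
      expPayoff A (Function.update x i y) i ≤ expPayoff A x i)
    :
    (∀ (i : Fin n) (s : S i), purePayoff A x i s ≤ expPayoff A x i) ∧
    (∀ (y : ∀ i, S i → ℝ) (p : Fin n → ℝ),
      (∀ i s, 0 ≤ y i s) → (∀ i, ∑ s, y i s = 1) →
      (∀ (i : Fin n) (s : S i), purePayoff A y i s ≤ p i) →
      ∑ i, expPayoff A y i - ∑ i, p i ≤
        ∑ i, expPayoff A x i - ∑ i, expPayoff A x i) := by
  have key : ∀ (z : ∀ i, S i → ℝ), (∀ i s, 0 ≤ z i s) → (∀ i, ∑ s, z i s = 1) →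
      ∀ (p : Fin n → ℝ), (∀ (i : Fin n) (s : S i), purePayoff A z i s ≤ p i) →
      ∑ i, expPayoff A z i ≤ ∑ i, p i := by
    intro z hz0 hz1 p hp
    refine Finset.sum_le_sum fun i _ => ?_
    rw [expPayoff_eq_sum]
    calc ∑ s, z i s * purePayoff A z i s ≤ ∑ s, z i s * p i :=
          Finset.sum_le_sum fun s _ => mul_le_mul_of_nonneg_left (hp i s) (hz0 i s)
      _ = p i := by rw [← Finset.sum_mul, hz1 i, one_mul]
  constructor
  · intro i s
    have h0 : ∀ s', (0:ℝ) ≤ if s' = s then 1 else 0 := by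
      intro s'; split <;> norm_num
    have h1 : ∑ s', (if s' = s then (1:ℝ) else 0) = 1 := by simp
    have := hNash i (fun s' => if s' = s then 1 else 0) h0 h1
    rw [expPayoff_eq_sum] at this
    simp only [Function.update_self, purePayoff_update] at this
    simpa using this
  · intro y p hy0 hy1 hp
    have := key y hy0 hy1 p hp
    linarith
end

section
/- Every feasible solution of the multilinear feasibility program MLP2 is a Nash equilibrium: if the mixed strategy profile x = (x^1,…,x^n) and p ∈ ℝ^n satisfy u_i(s, x) ≤ p^i for every player i and s ∈ S_i, and ∑_{i=1}^n U_i(x) − ∑_{i=1}^n p^i ≥ 0, then x is a Nash equilibrium. -/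
open Finset

lemma expPayoff_update_eq {n : ℕ} {S : Fin n → Type} [∀ i, Fintype (S i)]
    [∀ i, DecidableEq (S i)]
    (A : Fin n → (∀ j, S j) → ℝ) (x : ∀ i, S i → ℝ) (i : Fin n) (y : S i → ℝ) :
    expPayoff A (Function.update x i y) i = ∑ s, y s * purePayoff A x i s := by
  unfold expPayoff purePayoff
  have hprod : ∀ t : ∀ j, S j, (∏ j, Function.update x i y j (t j))
      = y (t i) * ∏ j ∈ Finset.univ.erase i, x j (t j) := by
    intro t
    rw [← Finset.mul_prod_erase Finset.univ _ (Finset.mem_univ i)]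
    congr 1
    · simp
    · exact Finset.prod_congr rfl fun j hj => by
        rw [Function.update_of_ne (Finset.ne_of_mem_erase hj)]
  simp only [hprod, Finset.mul_sum, mul_ite, mul_zero]
  rw [Finset.sum_comm]
  simp only [Finset.sum_ite_eq, Finset.mem_univ, if_true]
  exact Finset.sum_congr rfl fun t _ => by ring

/-- Every feasible solution of the multilinear feasibility program MLP2
is a Nash equilibrium. -/
theorem mlp2_feasible_gives_nash
    (n : ℕ) (hn : 2 ≤ n) (S : Fin n → Type)
    [∀ i, Fintype (S i)] [∀ i, Nonempty (S i)] [∀ i, DecidableEq (S i)]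
    (A : Fin n → (∀ j, S j) → ℝ)
    (x : ∀ i, S i → ℝ) (p : Fin n → ℝ)
    (hx0 : ∀ i s, 0 ≤ x i s) (hx1 : ∀ i, ∑ s, x i s = 1)
    (hp : ∀ (i : Fin n) (s : S i), purePayoff A x i s ≤ p i)
    (hobj : 0 ≤ ∑ i, expPayoff A x i - ∑ i, p i) :
    ∀ (i : Fin n) (y : S i → ℝ), (∀ s, 0 ≤ y s) → ∑ s, y s = 1 →
      expPayoff A (Function.update x i y) i ≤ expPayoff A x i := by
  have h1 : ∀ i, expPayoff A x i = ∑ s, x i s * purePayoff A x i s := fun i => by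
    rw [← expPayoff_update_eq A x i (x i), Function.update_eq_self]
  have h2 : ∀ i, expPayoff A x i ≤ p i := fun i => by
    rw [h1 i]
    calc ∑ s, x i s * purePayoff A x i s ≤ ∑ s, x i s * p i :=
          Finset.sum_le_sum fun s _ => mul_le_mul_of_nonneg_left (hp i s) (hx0 i s)
      _ = p i := by rw [← Finset.sum_mul, hx1, one_mul]
  have hsum : ∑ i, (p i - expPayoff A x i) = 0 := by
    have hle : ∑ i, (p i - expPayoff A x i) ≤ 0 := by
      rw [Finset.sum_sub_distrib]; linarith
    have hge : 0 ≤ ∑ i, (p i - expPayoff A x i) :=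
      Finset.sum_nonneg fun i _ => by linarith [h2 i]
    linarith
  have heq : ∀ i, expPayoff A x i = p i := fun i => by
    have := (Finset.sum_eq_zero_iff_of_nonneg
      (fun i _ => by linarith [h2 i] : ∀ i ∈ Finset.univ, 0 ≤ p i - expPayoff A x i)).mp hsum
      i (Finset.mem_univ i)
    linarith
  intro i y hy0 hy1
  rw [expPayoff_update_eq A x i y, heq i]
  calc ∑ s, y s * purePayoff A x i s ≤ ∑ s, y s * p i :=
        Finset.sum_le_sum fun s _ => mul_le_mul_of_nonneg_left (hp i s) (hy0 s)
    _ = p i := by rw [← Finset.sum_mul, hy1, one_mul]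
end

section
/- If the mixed strategy profile x = (x^1,…,x^n) is a Nash equilibrium, then there exist, for each player i, real numbers ū^i and, for each s ∈ S_i, reals u^i_s, r^i_s and b^i_s ∈ {0,1}, such that all MIMLP1 constraints hold: u^i_s = u_i(s, x); ū^i ≥ u^i_s; r^i_s = ū^i − u^i_s; r^i_s ≥ 0; x^i(s) ≤ 1 − b^i_s; and r^i_s ≤ U^i b^i_s, for all i and s ∈ S_i. -/
open Finset

set_option linter.unusedSectionVars false
set_option linter.unusedVariables false
section helpers


variable {n : ℕ} {S : Fin n → Type} [∀ i, Fintype (S i)] [∀ i, DecidableEq (S i)]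
  (A : Fin n → (∀ j, S j) → ℝ) (x : ∀ i, S i → ℝ) (i : Fin n)

/-- the Dirac mixed strategy -/
def dirac (s : S i) : S i → ℝ := fun a => if a = s then 1 else 0

lemma dirac_nonneg (s a : S i) : 0 ≤ dirac i s a := by
  unfold dirac; split <;> norm_num

lemma dirac_sum (s : S i) : ∑ a, dirac i s a = 1 := by
  simp [dirac]

lemma purePayoff_eq (s : S i) :
    purePayoff A x i s = ∑ t : ∀ j, S j, A i t * ∏ j, (Function.update x i (dirac i s)) j (t j) := by
  unfold purePayoff
  refine Finset.sum_congr rfl fun t _ => ?_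
  rw [← Finset.prod_erase_mul (univ : Finset (Fin n)) _ (Finset.mem_univ i)]
  have h1 : ∏ j ∈ univ.erase i, (Function.update x i (dirac i s)) j (t j)
      = ∏ j ∈ univ.erase i, x j (t j) := by
    refine Finset.prod_congr rfl fun j hj => ?_
    rw [Function.update_of_ne (Finset.mem_erase.1 hj).1]
  rw [h1, Function.update_self]
  unfold dirac
  by_cases h : t i = s <;> simp [h, mul_comm]

lemma purePayoff_eq_exp (s : S i) :
    purePayoff A x i s = expPayoff A (Function.update x i (dirac i s)) i := by
  rw [purePayoff_eq]; rfl

lemma exp_eq_sum (hx : ∀ j, ∑ a, x j a = 1) :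
    expPayoff A x i = ∑ s, x i s * purePayoff A x i s := by
  unfold expPayoff purePayoff
  simp_rw [Finset.mul_sum, mul_ite, mul_zero]
  rw [Finset.sum_comm]
  refine Finset.sum_congr rfl fun t _ => ?_
  rw [Finset.sum_ite_eq univ (t i)]
  simp only [mem_univ, if_true]
  rw [← Finset.mul_prod_erase (univ : Finset (Fin n)) (fun j => x j (t j)) (Finset.mem_univ i)]
  ring

lemma weights_sum (hx : ∀ j, ∑ a, x j a = 1) (s : S i) :
    ∑ t : ∀ j, S j, ∏ j, (Function.update x i (dirac i s)) j (t j) = 1 := by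
  rw [← Fintype.prod_sum]
  have : ∀ j, ∑ a, (Function.update x i (dirac i s)) j a = 1 := by
    intro j
    by_cases h : j = i
    · subst h; rw [Function.update_self]; exact dirac_sum _ s
    · rw [Function.update_of_ne h]; exact hx j
  simp [this]

lemma purePayoff_bounds [∀ i, Nonempty (S i)]
    (hx0 : ∀ j a, 0 ≤ x j a) (hx : ∀ j, ∑ a, x j a = 1) (s : S i) :
    univ.inf' Finset.univ_nonempty (A i) ≤ purePayoff A x i s ∧
    purePayoff A x i s ≤ univ.sup' Finset.univ_nonempty (A i) := by
  have hw : ∀ t : ∀ j, S j, 0 ≤ ∏ j, (Function.update x i (dirac i s)) j (t j) := by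
    intro t
    refine Finset.prod_nonneg fun j _ => ?_
    by_cases h : j = i
    · subst h; rw [Function.update_self]; exact dirac_nonneg _ s _
    · rw [Function.update_of_ne h]; exact hx0 j _
  rw [purePayoff_eq]
  constructor
  · calc univ.inf' Finset.univ_nonempty (A i)
        = ∑ t : ∀ j, S j, univ.inf' Finset.univ_nonempty (A i)
            * ∏ j, (Function.update x i (dirac i s)) j (t j) := by
          rw [← Finset.mul_sum, weights_sum x i hx, mul_one]
      _ ≤ _ := by
          refine Finset.sum_le_sum fun t _ => ?_
          exact mul_le_mul_of_nonneg_right (Finset.inf'_le _ (Finset.mem_univ t)) (hw t)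
  · calc ∑ t : ∀ j, S j, A i t * ∏ j, (Function.update x i (dirac i s)) j (t j)
        ≤ ∑ t : ∀ j, S j, univ.sup' Finset.univ_nonempty (A i)
            * ∏ j, (Function.update x i (dirac i s)) j (t j) := by
          refine Finset.sum_le_sum fun t _ => ?_
          exact mul_le_mul_of_nonneg_right (Finset.le_sup' _ (Finset.mem_univ t)) (hw t)
      _ = _ := by rw [← Finset.mul_sum, weights_sum x i hx, mul_one]

end helpers


/-- If the mixed strategy profile `x` is a Nash equilibrium, then there
exist `ū^i`, `u^i_s`, `r^i_s` and binary `b^i_s` satisfying all MIMLP1 constraints. -/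
theorem nash_gives_mimlp1_feasible
    (n : ℕ) (hn : 2 ≤ n) (S : Fin n → Type)
    [∀ i, Fintype (S i)] [∀ i, Nonempty (S i)] [∀ i, DecidableEq (S i)]
    (A : Fin n → (∀ j, S j) → ℝ)
    (x : ∀ i, S i → ℝ)
    (hx0 : ∀ i s, 0 ≤ x i s) (hx1 : ∀ i, ∑ s, x i s = 1)
    (hNash : ∀ (i : Fin n) (y : S i → ℝ), (∀ s, 0 ≤ y s) → ∑ s, y s = 1 →
      expPayoff A (Function.update x i y) i ≤ expPayoff A x i)
    :
    ∃ (ubar : Fin n → ℝ) (u r b : ∀ i, S i → ℝ),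
      ∀ (i : Fin n) (s : S i),
        (b i s = 0 ∨ b i s = 1) ∧
        u i s = purePayoff A x i s ∧
        u i s ≤ ubar i ∧
        r i s = ubar i - u i s ∧
        0 ≤ r i s ∧
        x i s ≤ 1 - b i s ∧
        r i s ≤ payoffRange A i * b i s := by
  refine ⟨fun i => expPayoff A x i, fun i s => purePayoff A x i s,
    fun i s => expPayoff A x i - purePayoff A x i s,
    fun i s => if x i s = 0 then 1 else 0, fun i s => ?_⟩
  have hle : purePayoff A x i s ≤ expPayoff A x i := by
    rw [purePayoff_eq_exp]
    exact hNash i (dirac i s) (dirac_nonneg i s) (dirac_sum i s)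
  have hle' : ∀ a, purePayoff A x i a ≤ expPayoff A x i := fun a => by
    rw [purePayoff_eq_exp]
    exact hNash i (dirac i a) (dirac_nonneg i a) (dirac_sum i a)
  have hsupp : x i s ≠ 0 → purePayoff A x i s = expPayoff A x i := by
    intro hne
    have hsum : ∑ a, x i a * (expPayoff A x i - purePayoff A x i a) = 0 := by
      simp only [mul_sub, Finset.sum_sub_distrib, ← Finset.sum_mul,
        hx1 i, one_mul]
      rw [exp_eq_sum A x i hx1]
      ring
    have hterm := (Finset.sum_eq_zero_iff_of_nonneg (fun a _ =>
      mul_nonneg (hx0 i a) (sub_nonneg.2 (hle' a)))).1 hsum s (Finset.mem_univ s)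
    rcases mul_eq_zero.1 hterm with h | h
    · exact absurd h hne
    · linarith [sub_eq_zero.1 h]
  refine ⟨?_, rfl, hle, rfl, sub_nonneg.2 hle, ?_, ?_⟩
  · by_cases h : x i s = 0 <;> simp [h]
  · by_cases h : x i s = 0
    · simp [h]
    · simp only [h, if_false, sub_zero]
      calc x i s ≤ ∑ a, x i a := Finset.single_le_sum (fun a _ => hx0 i a) (Finset.mem_univ s)
        _ = 1 := hx1 i
  · by_cases h : x i s = 0
    · simp only [h, if_true, mul_one]
      unfold payoffRange
      obtain ⟨hlo, _⟩ := purePayoff_bounds A x i hx0 hx1 s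
      have hup : expPayoff A x i ≤ univ.sup' Finset.univ_nonempty (A i) := by
        rw [exp_eq_sum A x i hx1]
        calc ∑ a, x i a * purePayoff A x i a
            ≤ ∑ a, x i a * univ.sup' Finset.univ_nonempty (A i) :=
              Finset.sum_le_sum fun a _ => mul_le_mul_of_nonneg_left
                (purePayoff_bounds A x i hx0 hx1 a).2 (hx0 i a)
          _ = _ := by rw [← Finset.sum_mul, hx1 i, one_mul]
      linarith
    · simp only [h, if_false, mul_zero]
      linarith [hsupp h]
end

section
/- If the mixed strategy profile x = (x^1,…,x^n) is a Nash equilibrium, then there exist reals ū^i, u^i_s, r^i_s, f^i_s and b^i_s ∈ {0,1} (for all players i and s ∈ S_i) satisfying the MIMLP2 constraints — u^i_s = u_i(s, x), ū^i ≥ u^i_s, r^i_s = ū^i − u^i_s, r^i_s ≥ 0, x^i(s) ≤ 1 − b^i_s, f^i_s ≥ r^i_s, f^i_s ≥ U^i b^i_s — whose objective value ∑_{i=1}^n ∑_{s∈S_i} (f^i_s − U^i b^i_s) equals 0. -/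
open Finset

/-- total weight of a mixed profile is 1 -/
lemma weight_sum_one {n : ℕ} {S : Fin n → Type} [∀ i, Fintype (S i)]
    (x : ∀ i, S i → ℝ) (hx1 : ∀ i, ∑ s, x i s = 1) :
    ∑ t : ∀ j, S j, ∏ j, x j (t j) = 1 := by
  have h := Finset.prod_univ_sum (fun i : Fin n => (Finset.univ : Finset (S i)))
      (fun i s => x i s)
  rw [Fintype.piFinset_univ] at h
  rw [← h]
  simp [hx1]

/-- `expPayoff` is bounded above by sup of payoffs -/
lemma expPayoff_le_sup {n : ℕ} {S : Fin n → Type} [∀ i, Fintype (S i)] [∀ i, Nonempty (S i)]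
    (A : Fin n → (∀ j, S j) → ℝ) (x : ∀ i, S i → ℝ)
    (hx0 : ∀ i s, 0 ≤ x i s) (hx1 : ∀ i, ∑ s, x i s = 1) (i : Fin n) :
    expPayoff A x i ≤ Finset.univ.sup' Finset.univ_nonempty (A i) := by
  have hw : ∀ t : ∀ j, S j, 0 ≤ ∏ j, x j (t j) := fun t =>
    Finset.prod_nonneg (fun j _ => hx0 j (t j))
  calc expPayoff A x i
      ≤ ∑ t : ∀ j, S j, Finset.univ.sup' Finset.univ_nonempty (A i) * ∏ j, x j (t j) := by
        apply Finset.sum_le_sum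
        intro t _
        exact mul_le_mul_of_nonneg_right (Finset.le_sup' (A i) (Finset.mem_univ t)) (hw t)
    _ = Finset.univ.sup' Finset.univ_nonempty (A i) := by
        rw [← Finset.mul_sum, weight_sum_one x hx1, mul_one]

lemma inf_le_expPayoff {n : ℕ} {S : Fin n → Type} [∀ i, Fintype (S i)] [∀ i, Nonempty (S i)]
    (A : Fin n → (∀ j, S j) → ℝ) (x : ∀ i, S i → ℝ)
    (hx0 : ∀ i s, 0 ≤ x i s) (hx1 : ∀ i, ∑ s, x i s = 1) (i : Fin n) :
    Finset.univ.inf' Finset.univ_nonempty (A i) ≤ expPayoff A x i := by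
  have hw : ∀ t : ∀ j, S j, 0 ≤ ∏ j, x j (t j) := fun t =>
    Finset.prod_nonneg (fun j _ => hx0 j (t j))
  calc Finset.univ.inf' Finset.univ_nonempty (A i)
      = ∑ t : ∀ j, S j, Finset.univ.inf' Finset.univ_nonempty (A i) * ∏ j, x j (t j) := by
        rw [← Finset.mul_sum, weight_sum_one x hx1, mul_one]
    _ ≤ expPayoff A x i := by
        apply Finset.sum_le_sum
        intro t _
        exact mul_le_mul_of_nonneg_right (Finset.inf'_le (A i) (Finset.mem_univ t)) (hw t)

/-- `purePayoff` equals `expPayoff` under the profile updated with a Dirac at `s`. -/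
lemma purePayoff_eq_expPayoff_update {n : ℕ} {S : Fin n → Type} [∀ i, Fintype (S i)]
    [∀ i, DecidableEq (S i)]
    (A : Fin n → (∀ j, S j) → ℝ) (x : ∀ i, S i → ℝ) (i : Fin n) (s : S i) :
    purePayoff A x i s
      = expPayoff A (Function.update x i (fun t => if t = s then 1 else 0)) i := by
  unfold purePayoff expPayoff
  apply Finset.sum_congr rfl
  intro t _
  have hprod : ∏ j, Function.update x i (fun t => if t = s then (1:ℝ) else 0) j (t j)
      = (if t i = s then (1:ℝ) else 0) * ∏ j ∈ Finset.univ.erase i, x j (t j) := by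
    rw [← Finset.mul_prod_erase Finset.univ _ (Finset.mem_univ i)]
    congr 1
    · simp
    · apply Finset.prod_congr rfl
      intro j hj
      rw [Function.update_of_ne (Finset.ne_of_mem_erase hj)]
  rw [hprod]
  split <;> ring

/-- If the mixed strategy profile `x` is a Nash equilibrium, then there
exist `ū^i`, `u^i_s`, `r^i_s`, `f^i_s` and binary `b^i_s` satisfying the MIMLP2 constraints
whose objective value `∑ᵢ ∑_{s ∈ S_i} (f^i_s − U^i b^i_s)` equals `0`. -/
theorem nash_gives_mimlp2_optimal
    (n : ℕ) (hn : 2 ≤ n) (S : Fin n → Type)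
    [∀ i, Fintype (S i)] [∀ i, Nonempty (S i)] [∀ i, DecidableEq (S i)]
    (A : Fin n → (∀ j, S j) → ℝ)
    (x : ∀ i, S i → ℝ)
    (hx0 : ∀ i s, 0 ≤ x i s) (hx1 : ∀ i, ∑ s, x i s = 1)
    (hNash : ∀ (i : Fin n) (y : S i → ℝ), (∀ s, 0 ≤ y s) → ∑ s, y s = 1 →
      expPayoff A (Function.update x i y) i ≤ expPayoff A x i)
    :
    ∃ (ubar : Fin n → ℝ) (u r f b : ∀ i, S i → ℝ),
      (∀ (i : Fin n) (s : S i),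
        (b i s = 0 ∨ b i s = 1) ∧
        u i s = purePayoff A x i s ∧
        u i s ≤ ubar i ∧
        r i s = ubar i - u i s ∧
        0 ≤ r i s ∧
        x i s ≤ 1 - b i s ∧
        r i s ≤ f i s ∧
        payoffRange A i * b i s ≤ f i s) ∧
      ∑ i, ∑ s, (f i s - payoffRange A i * b i s) = 0 := by
  classical
  -- updated profiles are valid
  have hup0 : ∀ (i : Fin n) (s : S i) (j : Fin n) (t : S j),
      0 ≤ Function.update x i (fun t => if t = s then (1:ℝ) else 0) j t := by
    intro i s j t
    rcases eq_or_ne j i with rfl | hj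
    · simp only [Function.update_self]
      split <;> norm_num
    · rw [Function.update_of_ne hj]; exact hx0 j t
  have hup1 : ∀ (i : Fin n) (s : S i) (j : Fin n),
      ∑ t, Function.update x i (fun t => if t = s then (1:ℝ) else 0) j t = 1 := by
    intro i s j
    rcases eq_or_ne j i with rfl | hj
    · simp
    · rw [Function.update_of_ne hj]; exact hx1 j
  -- pure payoffs are dominated by the Nash expected payoff
  have hle : ∀ (i : Fin n) (s : S i), purePayoff A x i s ≤ expPayoff A x i := by
    intro i s
    rw [purePayoff_eq_expPayoff_update]
    apply hNash
    · intro t; split <;> norm_num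
    · simp
  -- pure payoffs are at least the inf
  have hinf : ∀ (i : Fin n) (s : S i),
      Finset.univ.inf' Finset.univ_nonempty (A i) ≤ purePayoff A x i s := by
    intro i s
    rw [purePayoff_eq_expPayoff_update]
    exact inf_le_expPayoff A _ (hup0 i s) (hup1 i s) i
  -- payoffRange bound on the regret
  have hrbound : ∀ (i : Fin n) (s : S i),
      expPayoff A x i - purePayoff A x i s ≤ payoffRange A i := by
    intro i s
    have h1 := expPayoff_le_sup A x hx0 hx1 i
    have h2 := hinf i s
    unfold payoffRange
    linarith
  -- support strategies achieve the expected payoff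
  have hsupp : ∀ (i : Fin n) (s : S i), x i s ≠ 0 →
      expPayoff A x i - purePayoff A x i s = 0 := by
    intro i s hs
    have hsum : ∑ s, x i s * (expPayoff A x i - purePayoff A x i s) = 0 := by
      simp only [mul_sub, Finset.sum_sub_distrib, ← Finset.sum_mul, hx1 i, one_mul]
      rw [← expPayoff_eq_sum]
      ring
    have hnn : ∀ s ∈ (Finset.univ : Finset (S i)),
        0 ≤ x i s * (expPayoff A x i - purePayoff A x i s) := by
      intro s _
      exact mul_nonneg (hx0 i s) (by linarith [hle i s])
    have := (Finset.sum_eq_zero_iff_of_nonneg hnn).mp hsum s (Finset.mem_univ s)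
    rcases mul_eq_zero.mp this with h | h
    · exact absurd h hs
    · exact h
  refine ⟨fun i => expPayoff A x i,
    fun i s => purePayoff A x i s,
    fun i s => expPayoff A x i - purePayoff A x i s,
    fun i s => max (expPayoff A x i - purePayoff A x i s)
      (payoffRange A i * (if x i s = 0 then 1 else 0)),
    fun i s => if x i s = 0 then 1 else 0, ?_, ?_⟩
  · intro i s
    dsimp only
    refine ⟨?_, rfl, hle i s, rfl, by linarith [hle i s], ?_, le_max_left _ _, le_max_right _ _⟩
    · split <;> [right; left] <;> rfl
    · split
      · next h => rw [h]; norm_num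
      · simp only [sub_zero]
        have : x i s ≤ ∑ t, x i t :=
          Finset.single_le_sum (fun t _ => hx0 i t) (Finset.mem_univ s)
        rw [hx1 i] at this
        linarith
  · apply Finset.sum_eq_zero
    intro i _
    apply Finset.sum_eq_zero
    intro s _
    dsimp only
    rcases eq_or_ne (x i s) 0 with h | h
    · rw [if_pos h, mul_one, max_eq_right (hrbound i s), sub_self]
    · rw [if_neg h, mul_zero, sub_zero, hsupp i s h]
      simp
end

section
/- Assume U^i > 0 for every player i. If the mixed strategy profile x = (x^1,…,x^n) is a Nash equilibrium, then there exist reals ū^i, u^i_s, r^i_s, f^i_s, g^i_s and b^i_s ∈ {0,1} (for all players i and s ∈ S_i) satisfying the MIMLP4 constraints — u^i_s = u_i(s, x), ū^i ≥ u^i_s, r^i_s = ū^i − u^i_s, r^i_s ≥ 0, f^i_s ≥ r^i_s / U^i, f^i_s ≥ b^i_s, g^i_s ≥ x^i(s), g^i_s ≥ 1 − b^i_s — whose objective value ∑_{i=1}^n ∑_{s∈S_i} (f^i_s + g^i_s) equals ∑_{i=1}^n |S_i|. -/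
open Finset

section Aux

variable {n : ℕ} {S : Fin n → Type} [∀ i, Fintype (S i)] [∀ i, DecidableEq (S i)]

/-- The weights in a pure payoff sum to one. -/
lemma weight_sum (x : ∀ i, S i → ℝ) (hx1 : ∀ i, ∑ s, x i s = 1) (i : Fin n) (s : S i) :
    ∑ t : ∀ j, S j, (if t i = s then (1:ℝ) else 0) * ∏ j ∈ Finset.univ.erase i, x j (t j) = 1 := by
  classical
  set z : ∀ j, S j → ℝ := Function.update x i (fun b => if b = s then 1 else 0) with hz
  have hzsum : ∀ j, ∑ b, z j b = 1 := by
    intro j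
    by_cases hj : j = i
    · subst hj; simp [hz]
    · simp [hz, Function.update_of_ne hj, hx1 j]
  have key : ∑ t : ∀ j, S j, ∏ j, z j (t j) = 1 := by
    rw [← Fintype.prod_sum z]
    simp [hzsum]
  have term : ∀ t : ∀ j, S j, ∏ j, z j (t j)
      = (if t i = s then (1:ℝ) else 0) * ∏ j ∈ Finset.univ.erase i, x j (t j) := by
    intro t
    rw [← Finset.mul_prod_erase Finset.univ (fun j => z j (t j)) (Finset.mem_univ i)]
    have h1 : z i (t i) = if t i = s then (1:ℝ) else 0 := by simp [hz]
    have h2 : ∏ j ∈ Finset.univ.erase i, z j (t j) = ∏ j ∈ Finset.univ.erase i, x j (t j) :=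
      Finset.prod_congr rfl fun j hj => by
        simp [hz, Function.update_of_ne (Finset.mem_erase.mp hj).1]
    rw [h1, h2]
  calc ∑ t : ∀ j, S j, (if t i = s then (1:ℝ) else 0) * ∏ j ∈ Finset.univ.erase i, x j (t j)
      = ∑ t : ∀ j, S j, ∏ j, z j (t j) :=
        Finset.sum_congr rfl fun t _ => (term t).symm
    _ = 1 := key

lemma expPayoff_update (A : Fin n → (∀ j, S j) → ℝ) (x : ∀ i, S i → ℝ) (i : Fin n)
    (y : S i → ℝ) :
    expPayoff A (Function.update x i y) i = ∑ s, y s * purePayoff A x i s := by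
  classical
  unfold expPayoff purePayoff
  have hpull : ∀ s : S i,
      y s * ∑ t : ∀ j, S j, (if t i = s then A i t * ∏ j ∈ Finset.univ.erase i, x j (t j) else 0)
      = ∑ t : ∀ j, S j,
          (if t i = s then y s * (A i t * ∏ j ∈ Finset.univ.erase i, x j (t j)) else 0) := by
    intro s
    rw [Finset.mul_sum]
    exact Finset.sum_congr rfl fun t _ => by by_cases h : t i = s <;> simp [h]
  simp only [hpull]
  rw [Finset.sum_comm]
  refine Finset.sum_congr rfl fun t _ => ?_
  rw [Finset.sum_ite_eq Finset.univ (t i)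
    (fun s => y s * (A i t * ∏ j ∈ Finset.univ.erase i, x j (t j)))]
  simp only [Finset.mem_univ, if_true]
  rw [← Finset.mul_prod_erase Finset.univ (fun j => Function.update x i y j (t j))
    (Finset.mem_univ i)]
  have hprod : ∏ j ∈ Finset.univ.erase i, Function.update x i y j (t j)
      = ∏ j ∈ Finset.univ.erase i, x j (t j) :=
    Finset.prod_congr rfl fun j hj => by
      simp [Function.update_of_ne (Finset.mem_erase.mp hj).1]
  rw [hprod, Function.update_self]
  ring

end Aux

/-- Assume `U^i > 0` for every player. If the mixed strategy profile `x`
is a Nash equilibrium, then there exist `ū^i`, `u^i_s`, `r^i_s`, `f^i_s`, `g^i_s` and binary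
`b^i_s` satisfying the MIMLP4 constraints whose objective value `∑ᵢ ∑_{s ∈ S_i} (f^i_s + g^i_s)`
equals `∑ᵢ |S_i|`. -/
theorem nash_gives_mimlp4_optimal
    (n : ℕ) (hn : 2 ≤ n) (S : Fin n → Type)
    [∀ i, Fintype (S i)] [∀ i, Nonempty (S i)] [∀ i, DecidableEq (S i)]
    (A : Fin n → (∀ j, S j) → ℝ)
    (hU : ∀ i, 0 < payoffRange A i)
    (x : ∀ i, S i → ℝ)
    (hx0 : ∀ i s, 0 ≤ x i s) (hx1 : ∀ i, ∑ s, x i s = 1)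
    (hNash : ∀ (i : Fin n) (y : S i → ℝ), (∀ s, 0 ≤ y s) → ∑ s, y s = 1 →
      expPayoff A (Function.update x i y) i ≤ expPayoff A x i)
    :
    ∃ (ubar : Fin n → ℝ) (u r f g b : ∀ i, S i → ℝ),
      (∀ (i : Fin n) (s : S i),
        (b i s = 0 ∨ b i s = 1) ∧
        u i s = purePayoff A x i s ∧
        u i s ≤ ubar i ∧
        r i s = ubar i - u i s ∧
        0 ≤ r i s ∧
        r i s / payoffRange A i ≤ f i s ∧
        b i s ≤ f i s ∧
        x i s ≤ g i s ∧
        1 - b i s ≤ g i s) ∧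
      ∑ i, ∑ s, (f i s + g i s) = ∑ i, (Fintype.card (S i) : ℝ) := by
  classical
  set ubar : Fin n → ℝ := fun i => Finset.univ.sup' Finset.univ_nonempty (purePayoff A x i)
    with hubar
  have hwnn : ∀ (i : Fin n) (s : S i) (t : ∀ j, S j),
      0 ≤ (if t i = s then (1:ℝ) else 0) * ∏ j ∈ Finset.univ.erase i, x j (t j) := by
    intro i s t
    exact mul_nonneg (by positivity) (Finset.prod_nonneg fun j _ => hx0 j (t j))
  have hrw : ∀ (i : Fin n) (s : S i), purePayoff A x i s
      = ∑ t : ∀ j, S j,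
          ((if t i = s then (1:ℝ) else 0) * ∏ j ∈ Finset.univ.erase i, x j (t j)) * A i t := by
    intro i s
    unfold purePayoff
    refine Finset.sum_congr rfl fun t _ => ?_
    by_cases ht : t i = s <;> simp [ht, mul_comm]
  have hpure_le : ∀ (i : Fin n) (s : S i),
      purePayoff A x i s ≤ Finset.univ.sup' Finset.univ_nonempty (A i) := by
    intro i s
    have h := weight_sum x hx1 i s
    calc purePayoff A x i s
        = ∑ t : ∀ j, S j,
            ((if t i = s then (1:ℝ) else 0) * ∏ j ∈ Finset.univ.erase i, x j (t j)) * A i t :=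
          hrw i s
      _ ≤ ∑ t : ∀ j, S j,
            ((if t i = s then (1:ℝ) else 0) * ∏ j ∈ Finset.univ.erase i, x j (t j))
              * Finset.univ.sup' Finset.univ_nonempty (A i) :=
          Finset.sum_le_sum fun t _ =>
            mul_le_mul_of_nonneg_left (Finset.le_sup' _ (Finset.mem_univ t)) (hwnn i s t)
      _ = Finset.univ.sup' Finset.univ_nonempty (A i) := by rw [← Finset.sum_mul, h, one_mul]
  have hpure_ge : ∀ (i : Fin n) (s : S i),
      Finset.univ.inf' Finset.univ_nonempty (A i) ≤ purePayoff A x i s := by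
    intro i s
    have h := weight_sum x hx1 i s
    calc Finset.univ.inf' Finset.univ_nonempty (A i)
        = ∑ t : ∀ j, S j,
            ((if t i = s then (1:ℝ) else 0) * ∏ j ∈ Finset.univ.erase i, x j (t j))
              * Finset.univ.inf' Finset.univ_nonempty (A i) := by
          rw [← Finset.sum_mul, h, one_mul]
      _ ≤ ∑ t : ∀ j, S j,
            ((if t i = s then (1:ℝ) else 0) * ∏ j ∈ Finset.univ.erase i, x j (t j)) * A i t :=
          Finset.sum_le_sum fun t _ =>
            mul_le_mul_of_nonneg_left (Finset.inf'_le _ (Finset.mem_univ t)) (hwnn i s t)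
      _ = purePayoff A x i s := (hrw i s).symm
  have hle : ∀ (i : Fin n) (s : S i), purePayoff A x i s ≤ ubar i := fun i s =>
    Finset.le_sup' _ (Finset.mem_univ s)
  have hexp : ∀ i : Fin n, expPayoff A x i = ∑ s, x i s * purePayoff A x i s := by
    intro i
    have := expPayoff_update A x i (x i)
    rwa [Function.update_eq_self] at this
  have hsupp : ∀ (i : Fin n) (s : S i), x i s ≠ 0 → purePayoff A x i s = ubar i := by
    intro i s hs
    obtain ⟨s0, _, hs0⟩ := Finset.exists_mem_eq_sup' (Finset.univ_nonempty (α := S i))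
      (purePayoff A x i)
    have hdelta := hNash i (fun b => if b = s0 then 1 else 0) (fun b => by positivity)
      (by simp)
    rw [expPayoff_update] at hdelta
    simp only [ite_mul, one_mul, zero_mul, Finset.sum_ite_eq' Finset.univ s0,
      Finset.mem_univ, if_true] at hdelta
    rw [hexp i] at hdelta
    have h2 : ubar i ≤ ∑ b, x i b * purePayoff A x i b := le_of_eq_of_le hs0 hdelta
    have hzero : ∑ b, x i b * (ubar i - purePayoff A x i b) = 0 := by
      have hle' : ∑ b, x i b * ubar i = ubar i := by
        rw [← Finset.sum_mul, hx1 i, one_mul]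
      have h1 : ∑ b, x i b * (ubar i - purePayoff A x i b)
          = ubar i - ∑ b, x i b * purePayoff A x i b := by
        simp [mul_sub, Finset.sum_sub_distrib, hle']
      have h3 : 0 ≤ ∑ b, x i b * (ubar i - purePayoff A x i b) :=
        Finset.sum_nonneg fun b _ => mul_nonneg (hx0 i b) (sub_nonneg.mpr (hle i b))
      linarith
    have := (Finset.sum_eq_zero_iff_of_nonneg
      (fun b _ => mul_nonneg (hx0 i b) (sub_nonneg.mpr (hle i b)))).mp hzero s (Finset.mem_univ s)
    rcases mul_eq_zero.mp this with h | h
    · exact absurd h hs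
    · linarith [sub_eq_zero.mp h]
  have hubar_le : ∀ i : Fin n, ubar i ≤ Finset.univ.sup' Finset.univ_nonempty (A i) :=
    fun i => Finset.sup'_le _ _ fun s _ => hpure_le i s
  refine ⟨ubar, fun i s => purePayoff A x i s,
    fun i s => ubar i - purePayoff A x i s,
    fun i s => if x i s = 0 then 1 else 0,
    fun i s => if x i s = 0 then 0 else 1,
    fun i s => if x i s = 0 then 1 else 0, fun i s => ?_, ?_⟩
  · have hr0 : 0 ≤ ubar i - purePayoff A x i s := sub_nonneg.mpr (hle i s)
    have hrU : ubar i - purePayoff A x i s ≤ payoffRange A i := by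
      have := hpure_ge i s
      have := hubar_le i
      unfold payoffRange
      linarith
    refine ⟨?_, rfl, hle i s, rfl, hr0, ?_, ?_, ?_, ?_⟩
    · by_cases h : x i s = 0 <;> simp [h]
    · by_cases h : x i s = 0
      · simp only [h, if_true]
        rw [div_le_one (hU i)]
        exact hrU
      · simp only [h, if_false]
        rw [hsupp i s h]
        simp
    · by_cases h : x i s = 0 <;> simp [h]
    · by_cases h : x i s = 0
      · simp [h]
      · simp only [h, if_false]
        calc x i s ≤ ∑ b, x i b :=
              Finset.single_le_sum (fun b _ => hx0 i b) (Finset.mem_univ s)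
          _ = 1 := hx1 i
    · by_cases h : x i s = 0 <;> simp [h]
  · refine Finset.sum_congr rfl fun i _ => ?_
    have hone : ∀ s : S i,
        (if x i s = 0 then (1:ℝ) else 0) + (if x i s = 0 then (0:ℝ) else 1) = 1 := by
      intro s; by_cases h : x i s = 0 <;> simp [h]
    simp [hone]
end

section
/- Assume U^i > 0 for every player i. Suppose a mixed strategy profile x and reals ū^i, u^i_s, r^i_s, f^i_s, g^i_s, b^i_s ∈ {0,1} (for all players i and s ∈ S_i) satisfy the MIMLP4 constraints — u^i_s = u_i(s, x), ū^i ≥ u^i_s, r^i_s = ū^i − u^i_s, r^i_s ≥ 0, f^i_s ≥ r^i_s / U^i, f^i_s ≥ b^i_s, g^i_s ≥ x^i(s), g^i_s ≥ 1 − b^i_s. Then the objective value ∑_{i=1}^n ∑_{s∈S_i} (f^i_s + g^i_s) is ≥ ∑_{i=1}^n |S_i|, and if it equals ∑_{i=1}^n |S_i| then x is a Nash equilibrium. -/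
open Finset

/-- Assume `U^i > 0` for every player. If the mixed strategy profile `x`
together with `ū^i`, `u^i_s`, `r^i_s`, `f^i_s`, `g^i_s` and binary `b^i_s` satisfies the
MIMLP4 constraints, then the objective value `∑ᵢ ∑_{s ∈ S_i} (f^i_s + g^i_s)` is
`≥ ∑ᵢ |S_i|`, and if it equals `∑ᵢ |S_i|` then `x` is a Nash equilibrium. -/
theorem mimlp4_objective_bound_and_optimal_gives_nash
    (n : ℕ) (hn : 2 ≤ n) (S : Fin n → Type)
    [∀ i, Fintype (S i)] [∀ i, Nonempty (S i)] [∀ i, DecidableEq (S i)]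
    (A : Fin n → (∀ j, S j) → ℝ)
    (hU : ∀ i, 0 < payoffRange A i)
    (x : ∀ i, S i → ℝ)
    (hx0 : ∀ i s, 0 ≤ x i s) (hx1 : ∀ i, ∑ s, x i s = 1)
    (ubar : Fin n → ℝ) (u r f g b : ∀ i, S i → ℝ)
    (hfeas : ∀ (i : Fin n) (s : S i),
        (b i s = 0 ∨ b i s = 1) ∧
        u i s = purePayoff A x i s ∧
        u i s ≤ ubar i ∧
        r i s = ubar i - u i s ∧
        0 ≤ r i s ∧
        r i s / payoffRange A i ≤ f i s ∧
        b i s ≤ f i s ∧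
        x i s ≤ g i s ∧
        1 - b i s ≤ g i s) :
    ∑ i, (Fintype.card (S i) : ℝ) ≤ ∑ i, ∑ s, (f i s + g i s) ∧
    (∑ i, ∑ s, (f i s + g i s) = ∑ i, (Fintype.card (S i) : ℝ) →
      ∀ (i : Fin n) (y : S i → ℝ), (∀ s, 0 ≤ y s) → ∑ s, y s = 1 →
      expPayoff A (Function.update x i y) i ≤ expPayoff A x i) := by
  have hone : ∀ (i : Fin n) (s : S i), 1 ≤ f i s + g i s := by
    intro i s
    obtain ⟨hb, hu, hub, hr, hr0, hfr, hfb, hgx, hgb⟩ := hfeas i s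
    rcases hb with h0 | h1
    · have hf : 0 ≤ f i s := le_trans (div_nonneg hr0 (hU i).le) hfr
      have : (1:ℝ) - 0 ≤ g i s := by rw [← h0]; exact hgb
      linarith
    · have hg : 0 ≤ g i s := le_trans (hx0 i s) hgx
      linarith [h1 ▸ hfb]
  have hbound : ∑ i, (Fintype.card (S i) : ℝ) ≤ ∑ i, ∑ s, (f i s + g i s) := by
    refine Finset.sum_le_sum fun i _ => ?_
    calc (Fintype.card (S i) : ℝ) = ∑ _s : S i, (1:ℝ) := by simp
      _ ≤ ∑ s, (f i s + g i s) := Finset.sum_le_sum fun s _ => hone i s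
  refine ⟨hbound, fun heq i y hy0 hy1 => ?_⟩
  -- equality forces f+g = 1 pointwise
  have hpt : ∀ (j : Fin n) (s : S j), f j s + g j s = 1 := by
    by_contra hc
    push_neg at hc
    obtain ⟨j, s, hjs⟩ := hc
    have hlt : (1:ℝ) < f j s + g j s := lt_of_le_of_ne (hone j s) (Ne.symm hjs)
    have h1 : ∑ s, (f j s + g j s) > (Fintype.card (S j) : ℝ) := by
      calc (Fintype.card (S j) : ℝ) = ∑ _s : S j, (1:ℝ) := by simp
        _ < ∑ s, (f j s + g j s) :=
          Finset.sum_lt_sum (fun s _ => hone j s) ⟨s, Finset.mem_univ s, hlt⟩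
    have h2 : ∑ i, ∑ s, (f i s + g i s) > ∑ i, (Fintype.card (S i) : ℝ) := by
      refine Finset.sum_lt_sum (fun i _ => ?_) ⟨j, Finset.mem_univ j, h1⟩
      calc (Fintype.card (S i) : ℝ) = ∑ _s : S i, (1:ℝ) := by simp
        _ ≤ ∑ s, (f i s + g i s) := Finset.sum_le_sum fun s _ => hone i s
    linarith
  -- complementary slackness
  have hcs : ∀ s : S i, x i s = 0 ∨ purePayoff A x i s = ubar i := by
    intro s
    obtain ⟨hb, hu, hub, hr, hr0, hfr, hfb, hgx, hgb⟩ := hfeas i s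
    have hsum := hpt i s
    rcases hb with h0 | h1
    · right
      have hg1 : (1:ℝ) ≤ g i s := by rw [← sub_zero (1:ℝ), ← h0]; exact hgb
      have hf0 : f i s ≤ 0 := by linarith
      have : r i s / payoffRange A i ≤ 0 := le_trans hfr hf0
      have hr' : r i s ≤ 0 := by
        by_contra hcon
        push_neg at hcon
        exact absurd this (not_le.mpr (div_pos hcon (hU i)))
      have : r i s = 0 := le_antisymm hr' hr0
      rw [← hu]
      linarith [hr ▸ this]
    · left
      have hf1 : (1:ℝ) ≤ f i s := h1 ▸ hfb
      have hg0 : g i s ≤ 0 := by linarith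
      exact le_antisymm (le_trans hgx hg0) (hx0 i s)
  have hux : expPayoff A x i = ubar i := by
    have := expPayoff_update_eq A x i (x i)
    rw [Function.update_eq_self] at this
    rw [this]
    have : ∀ s : S i, x i s * purePayoff A x i s = x i s * ubar i := by
      intro s
      rcases hcs s with h | h
      · rw [h]; ring
      · rw [h]
    rw [Finset.sum_congr rfl fun s _ => this s, ← Finset.sum_mul, hx1 i, one_mul]
  rw [expPayoff_update_eq, hux]
  calc ∑ s, y s * purePayoff A x i s ≤ ∑ s, y s * ubar i := by
        refine Finset.sum_le_sum fun s _ => mul_le_mul_of_nonneg_left ?_ (hy0 s)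
        obtain ⟨_, hu, hub, _⟩ := hfeas i s
        rw [← hu]; exact hub
    _ = ubar i := by rw [← Finset.sum_mul, hy1, one_mul]
end
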